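/- Let r be a positive integer and t ≥ 2 an integer. Let n₁ = (6(t−1)−1)r + 2 and n₂ = 2(t−1)·binom(6(t−1), 2) + 3(t−1)(r+1) + 1. Then every coloring of the edges of the complete bipartite graph K_{n₁,n₂} with r colors contains a monochromatic copy of K_{2,t} or a rainbow copy of K_{2,t}, where in each case the side of size 2 lies in the part of size n₁ and the side of size t lies in the part of size n₂. -/

import Mathlib

/-- The coloring `c` of the edges of `K_{n₁,n₂}` contains a monochromatic copy of `K_{s,t}`
with the `s`-side in the first part and the `t`-side in the second part. -/
def HasMonoKst {n₁ n₂ r : ℕ} (c : Fin n₁ × Fin n₂ → Fin r) (s t : ℕ) : Prop :=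
  ∃ (A : Finset (Fin n₁)) (B : Finset (Fin n₂)), A.card = s ∧ B.card = t ∧
    ∀ a ∈ A, ∀ b ∈ B, ∀ a' ∈ A, ∀ b' ∈ B, c (a, b) = c (a', b')

/-- The coloring `c` of the edges of `K_{n₁,n₂}` contains a rainbow copy of `K_{s,t}`
with the `s`-side in the first part and the `t`-side in the second part. -/
def HasRainbowKst {n₁ n₂ r : ℕ} (c : Fin n₁ × Fin n₂ → Fin r) (s t : ℕ) : Prop :=
  ∃ (A : Finset (Fin n₁)) (B : Finset (Fin n₂)), A.card = s ∧ B.card = t ∧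
    ∀ a ∈ A, ∀ b ∈ B, ∀ a' ∈ A, ∀ b' ∈ B, (a, b) ≠ (a', b') → c (a, b) ≠ c (a', b')

/-- For a positive integer `r`, `t ≥ 2`, `n₁ = (6(t-1)-1)r + 2` and
`n₂ = 2(t-1)·C(6(t-1),2) + 3(t-1)(r+1) + 1`, every `r`-coloring of `K_{n₁,n₂}` contains a
monochromatic or rainbow copy of `K_{2,t}` with the `2`-side in the part of size `n₁`. -/
theorem bipartite_gallai_ramsey_K2t (r t n₁ n₂ : ℕ) (hr : 0 < r) (ht : 2 ≤ t)
    (hn₁ : n₁ = (6 * (t - 1) - 1) * r + 2)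
    (hn₂ : n₂ = 2 * (t - 1) * Nat.choose (6 * (t - 1)) 2 + 3 * (t - 1) * (r + 1) + 1)
    (c : Fin n₁ × Fin n₂ → Fin r) :
    HasMonoKst c 2 t ∨ HasRainbowKst c 2 t := by
  classical
  by_contra hcon
  push_neg at hcon
  obtain ⟨hmono, hrain⟩ := hcon
  set m : ℕ := t - 1 with hm_def
  have hm1 : 1 ≤ m := by omega
  -- Key monochromatic bound: two rows agree on a fixed color on at most m columns
  have key : ∀ a a' : Fin n₁, a ≠ a' → ∀ i : Fin r,
      (Finset.univ.filter fun v : Fin n₂ => c (a, v) = i ∧ c (a', v) = i).card ≤ m := by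
    intro a a' hne i
    by_contra hlt
    push_neg at hlt
    have hcard : t ≤ (Finset.univ.filter fun v : Fin n₂ => c (a, v) = i ∧ c (a', v) = i).card := by
      omega
    obtain ⟨B, hBsub, hBcard⟩ := Finset.exists_subset_card_eq hcard
    apply hmono
    refine ⟨{a, a'}, B, ?_, hBcard, ?_⟩
    · rw [Finset.card_insert_of_notMem (by simpa using hne), Finset.card_singleton]
    · intro x hx b hb x' hx' b' hb'
      have hcol : ∀ y ∈ ({a, a'} : Finset (Fin n₁)), ∀ w ∈ B, c (y, w) = i := by
        intro y hy w hw
        have hw2 := hBsub hw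
        simp only [Finset.mem_filter] at hw2
        rcases Finset.mem_insert.mp hy with rfl | hy
        · exact hw2.2.1
        · simp only [Finset.mem_singleton] at hy
          subst hy
          exact hw2.2.2
      rw [hcol x hx b hb, hcol x' hx' b' hb']
  -- color degrees
  set d : Fin n₁ → Fin r → ℕ :=
    fun u i => (Finset.univ.filter fun v : Fin n₂ => c (u, v) = i).card with hd
  set Q : ℕ := 3 * m * (6 * m - 1) with hQ
  set D : ℕ := (Q + r + 3) / 2 with hDdef
  have hD2 : Q + r + 2 ≤ 2 * D ∧ 2 * D ≤ Q + r + 3 := by omega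
  have hch : Nat.choose (6 * m) 2 = Q := by
    rw [Nat.choose_two_right, hQ]
    have h : 6 * m * (6 * m - 1) = 2 * (3 * m * (6 * m - 1)) := by ring
    rw [h, Nat.mul_div_cancel_left _ (by norm_num)]
  have hn₂' : n₂ = 2 * m * Q + 3 * m * (r + 1) + 1 := by rw [hn₂, hch]
  have hkle : ∀ k : ℕ, k ≤ 1 + Nat.choose k 2 := by
    intro k
    match k with
    | 0 => simp
    | 1 => simp
    | (n + 2) =>
      have h1 : Nat.choose (n + 2) 2 = Nat.choose (n + 1) 1 + Nat.choose (n + 1) 2 :=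
        Nat.choose_succ_succ (n + 1) 1
      rw [Nat.choose_one_right] at h1
      omega
  -- Claim B: for each color, few rows have degree ≥ D in that color
  have claimB : ∀ i : Fin r,
      (Finset.univ.filter fun u : Fin n₁ => D ≤ d u i).card ≤ 6 * m - 1 := by
    intro i
    by_contra hbig
    push_neg at hbig
    have h6m : 6 * m ≤ (Finset.univ.filter fun u : Fin n₁ => D ≤ d u i).card := by omega
    obtain ⟨T, hTsub, hTcard⟩ := Finset.exists_subset_card_eq h6m
    have hTD : ∀ u ∈ T, D ≤ d u i := by
      intro u hu
      have hu2 := hTsub hu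
      simp only [Finset.mem_filter] at hu2
      exact hu2.2
    have hlow : 6 * m * D ≤ ∑ u ∈ T, d u i := by
      have h := Finset.card_nsmul_le_sum T (fun u => d u i) D hTD
      rwa [hTcard, smul_eq_mul] at h
    have hswap : ∑ u ∈ T, d u i
        = ∑ v : Fin n₂, (T.filter fun u => c (u, v) = i).card := by
      simp only [hd, Finset.card_filter]
      exact Finset.sum_comm
    have hpair : ∀ v : Fin n₂,
        ((T.filter fun u => c (u, v) = i).card).choose 2
          = ((Finset.powersetCard 2 T).filter fun p => ∀ u ∈ p, c (u, v) = i).card := by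
      intro v
      rw [← Finset.card_powersetCard]
      congr 1
      ext p
      constructor
      · intro hp
        rw [Finset.mem_powersetCard] at hp
        rw [Finset.mem_filter, Finset.mem_powersetCard]
        obtain ⟨hsub, hcard⟩ := hp
        refine ⟨⟨fun x hx => (Finset.mem_filter.mp (hsub hx)).1, hcard⟩,
          fun u hu => (Finset.mem_filter.mp (hsub hu)).2⟩
      · intro hp
        rw [Finset.mem_filter, Finset.mem_powersetCard] at hp
        rw [Finset.mem_powersetCard]
        obtain ⟨⟨hsub, hcard⟩, hall⟩ := hp
        exact ⟨fun x hx => Finset.mem_filter.mpr ⟨hsub hx, hall x hx⟩, hcard⟩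
    have hsum2 : ∑ v : Fin n₂, ((T.filter fun u => c (u, v) = i).card).choose 2 ≤ Q * m := by
      calc ∑ v : Fin n₂, ((T.filter fun u => c (u, v) = i).card).choose 2
          = ∑ v : Fin n₂,
              ((Finset.powersetCard 2 T).filter fun p => ∀ u ∈ p, c (u, v) = i).card :=
            Finset.sum_congr rfl fun v _ => hpair v
        _ = ∑ p ∈ Finset.powersetCard 2 T,
              (Finset.univ.filter fun v : Fin n₂ => ∀ u ∈ p, c (u, v) = i).card := by
            simp only [Finset.card_filter]
            exact Finset.sum_comm
        _ ≤ ∑ _p ∈ Finset.powersetCard 2 T, m := by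
            apply Finset.sum_le_sum
            intro p hp
            rw [Finset.mem_powersetCard] at hp
            obtain ⟨x, y, hxy, rfl⟩ := Finset.card_eq_two.mp hp.2
            calc (Finset.univ.filter fun v : Fin n₂ =>
                    ∀ u ∈ ({x, y} : Finset (Fin n₁)), c (u, v) = i).card
                ≤ (Finset.univ.filter fun v : Fin n₂ => c (x, v) = i ∧ c (y, v) = i).card := by
                  apply Finset.card_le_card
                  intro v hv
                  simp only [Finset.mem_filter, Finset.mem_insert, Finset.mem_singleton,
                    Finset.mem_univ, true_and] at hv ⊢
                  exact ⟨hv x (Or.inl rfl), hv y (Or.inr rfl)⟩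
              _ ≤ m := key x y hxy i
        _ = (Finset.powersetCard 2 T).card * m := by rw [Finset.sum_const, smul_eq_mul]
        _ = Q * m := by rw [Finset.card_powersetCard, hTcard, hch]
    have hup : ∑ v : Fin n₂, (T.filter fun u => c (u, v) = i).card ≤ n₂ + Q * m := by
      calc ∑ v : Fin n₂, (T.filter fun u => c (u, v) = i).card
          ≤ ∑ v : Fin n₂, (1 + ((T.filter fun u => c (u, v) = i).card).choose 2) :=
            Finset.sum_le_sum fun v _ => hkle _
        _ = n₂ + ∑ v : Fin n₂, ((T.filter fun u => c (u, v) = i).card).choose 2 := by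
            rw [Finset.sum_add_distrib, Finset.sum_const, Finset.card_univ, Fintype.card_fin,
              smul_eq_mul, mul_one]
        _ ≤ n₂ + Q * m := by exact Nat.add_le_add_left hsum2 n₂
    have hfinal : 6 * m * D ≤ n₂ + Q * m := by
      rw [hswap] at hlow
      exact le_trans hlow hup
    have hmul : 3 * m * (Q + r + 2) ≤ 3 * m * (2 * D) :=
      Nat.mul_le_mul_left _ hD2.1
    linarith [hfinal, hmul, hn₂', hm1]
  -- choose two rows with all color degrees < D
  have hBadcard : (Finset.univ.filter fun u : Fin n₁ => ∃ i, D ≤ d u i).card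
      ≤ r * (6 * m - 1) := by
    calc (Finset.univ.filter fun u : Fin n₁ => ∃ i, D ≤ d u i).card
        ≤ ((Finset.univ : Finset (Fin r)).biUnion fun i =>
            Finset.univ.filter fun u : Fin n₁ => D ≤ d u i).card := by
          apply Finset.card_le_card
          intro u hu
          simp only [Finset.mem_filter, Finset.mem_biUnion, Finset.mem_univ, true_and] at hu ⊢
          obtain ⟨i, hi⟩ := hu
          exact ⟨i, hi⟩
      _ ≤ ∑ i : Fin r, (Finset.univ.filter fun u : Fin n₁ => D ≤ d u i).card :=
          Finset.card_biUnion_le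
      _ ≤ ∑ _i : Fin r, (6 * m - 1) := Finset.sum_le_sum fun i _ => claimB i
      _ = r * (6 * m - 1) := by
          rw [Finset.sum_const, Finset.card_univ, Fintype.card_fin, smul_eq_mul]
  have hGood : 1 < (Finset.univ.filter fun u : Fin n₁ => ¬ ∃ i, D ≤ d u i).card := by
    have hpart := Finset.card_filter_add_card_filter_not
      (s := (Finset.univ : Finset (Fin n₁))) (p := fun u => ∃ i, D ≤ d u i)
    rw [Finset.card_univ, Fintype.card_fin] at hpart
    have hcomm : r * (6 * m - 1) = (6 * m - 1) * r := Nat.mul_comm _ _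
    omega
  obtain ⟨a, ha, a', ha', haa'⟩ := Finset.one_lt_card.mp hGood
  simp only [Finset.mem_filter, Finset.mem_univ, true_and] at ha ha'
  have hda : ∀ i, d a i < D := by
    push_neg at ha; exact ha
  have hda' : ∀ i, d a' i < D := by
    push_neg at ha'; exact ha'
  -- cover lemma from no rainbow
  have hNsub : ∃ Cl : Finset (Fin r), Cl.card ≤ 2 * m ∧
      ∀ v : Fin n₂, c (a, v) ≠ c (a', v) → c (a, v) ∈ Cl ∨ c (a', v) ∈ Cl := by
    set N := Finset.univ.filter fun v : Fin n₂ => ¬ c (a, v) = c (a', v) with hN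
    set good : Finset (Fin n₂) → Prop := fun B => ∀ v ∈ B, ∀ w ∈ B, v ≠ w →
      c (a, v) ≠ c (a, w) ∧ c (a, v) ≠ c (a', w) ∧ c (a', v) ≠ c (a, w) ∧
        c (a', v) ≠ c (a', w) with hgood
    have hnemp : (N.powerset.filter good).Nonempty := by
      refine ⟨∅, Finset.mem_filter.mpr ⟨Finset.empty_mem_powerset _, ?_⟩⟩
      intro v hv
      exact absurd hv (Finset.notMem_empty v)
    obtain ⟨B, hBmem, hBmax⟩ := Finset.exists_max_image _ Finset.card hnemp
    rw [Finset.mem_filter, Finset.mem_powerset] at hBmem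
    obtain ⟨hBN, hBg⟩ := hBmem
    have hBcard : B.card ≤ m := by
      by_contra hBc
      push_neg at hBc
      have hBt : t ≤ B.card := by omega
      obtain ⟨B', hB'B, hB'card⟩ := Finset.exists_subset_card_eq hBt
      apply hrain
      refine ⟨{a, a'}, B', ?_, hB'card, ?_⟩
      · rw [Finset.card_insert_of_notMem (by simpa using haa'), Finset.card_singleton]
      · intro x hx b hb x' hx' b' hb' hne2
        have hbB := hB'B hb
        have hb'B := hB'B hb'
        have hbN := hBN hbB
        rw [hN, Finset.mem_filter] at hbN
        have hxc : x = a ∨ x = a' := by simpa using hx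
        have hx'c : x' = a ∨ x' = a' := by simpa using hx'
        rcases eq_or_ne b b' with rfl | hbb'
        · have hxx' : x ≠ x' := by
            intro h
            apply hne2
            rw [h]
          rcases hxc with rfl | rfl <;> rcases hx'c with rfl | rfl
          · exact absurd rfl hxx'
          · exact hbN.2
          · exact fun h => hbN.2 h.symm
          · exact absurd rfl hxx'
        · have h4 := hBg b hbB b' hb'B hbb'
          rcases hxc with rfl | rfl <;> rcases hx'c with rfl | rfl
          · exact h4.1
          · exact h4.2.1
          · exact h4.2.2.1
          · exact h4.2.2.2
    refine ⟨B.biUnion (fun w => ({c (a, w), c (a', w)} : Finset (Fin r))), ?_, ?_⟩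
    · calc (B.biUnion fun w => ({c (a, w), c (a', w)} : Finset (Fin r))).card
          ≤ ∑ w ∈ B, ({c (a, w), c (a', w)} : Finset (Fin r)).card :=
            Finset.card_biUnion_le
        _ ≤ ∑ _w ∈ B, 2 := by
            apply Finset.sum_le_sum
            intro w _
            exact (Finset.card_insert_le _ _).trans (by simp)
        _ = B.card * 2 := by rw [Finset.sum_const, smul_eq_mul]
        _ ≤ 2 * m := by omega
    · intro v hv
      by_contra hvc
      push_neg at hvc
      obtain ⟨hv1, hv2⟩ := hvc
      have hColMem : ∀ w ∈ B,
          c (a, w) ∈ B.biUnion (fun w => ({c (a, w), c (a', w)} : Finset (Fin r))) ∧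
          c (a', w) ∈ B.biUnion (fun w => ({c (a, w), c (a', w)} : Finset (Fin r))) := by
        intro w hw
        constructor <;> exact Finset.mem_biUnion.mpr ⟨w, hw, by simp⟩
      have hvB : v ∉ B := by
        intro hvB
        exact hv1 (hColMem v hvB).1
      have hins : insert v B ∈ N.powerset.filter good := by
        rw [Finset.mem_filter, Finset.mem_powerset]
        constructor
        · intro x hx
          rcases Finset.mem_insert.mp hx with rfl | hx
          · rw [hN, Finset.mem_filter]
            exact ⟨Finset.mem_univ _, hv⟩
          · exact hBN hx
        · intro x hx w hw hxw
          rcases Finset.mem_insert.mp hx with hx1 | hx1 <;>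
            rcases Finset.mem_insert.mp hw with hw1 | hw1
          · exact absurd (hx1.trans hw1.symm) hxw
          · obtain ⟨h1, h2⟩ := hColMem w hw1
            subst hx1
            refine ⟨?_, ?_, ?_, ?_⟩
            · intro h; exact hv1 (by rw [h]; exact h1)
            · intro h; exact hv1 (by rw [h]; exact h2)
            · intro h; exact hv2 (by rw [h]; exact h1)
            · intro h; exact hv2 (by rw [h]; exact h2)
          · obtain ⟨h1, h2⟩ := hColMem x hx1
            subst hw1
            refine ⟨?_, ?_, ?_, ?_⟩
            · intro h; exact hv1 (by rw [← h]; exact h1)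
            · intro h; exact hv2 (by rw [← h]; exact h1)
            · intro h; exact hv1 (by rw [← h]; exact h2)
            · intro h; exact hv2 (by rw [← h]; exact h2)
          · exact hBg x hx1 w hw1 hxw
      have hle := hBmax _ hins
      rw [Finset.card_insert_of_notMem hvB] at hle
      omega
  obtain ⟨Cl, hClcard, hClcover⟩ := hNsub
  -- loops
  have hloops : (Finset.univ.filter fun v : Fin n₂ => c (a, v) = c (a', v)).card ≤ r * m := by
    calc (Finset.univ.filter fun v : Fin n₂ => c (a, v) = c (a', v)).card
        ≤ ((Finset.univ : Finset (Fin r)).biUnion fun i =>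
            Finset.univ.filter fun v : Fin n₂ => c (a, v) = i ∧ c (a', v) = i).card := by
          apply Finset.card_le_card
          intro v hv
          simp only [Finset.mem_filter, Finset.mem_univ, true_and] at hv
          refine Finset.mem_biUnion.mpr ⟨c (a, v), Finset.mem_univ _, ?_⟩
          exact Finset.mem_filter.mpr ⟨Finset.mem_univ _, rfl, hv.symm⟩
      _ ≤ ∑ i : Fin r,
            (Finset.univ.filter fun v : Fin n₂ => c (a, v) = i ∧ c (a', v) = i).card :=
          Finset.card_biUnion_le
      _ ≤ ∑ _i : Fin r, m := Finset.sum_le_sum fun i _ => key a a' haa' i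
      _ = r * m := by rw [Finset.sum_const, Finset.card_univ, Fintype.card_fin, smul_eq_mul]
  -- nonloops
  have hDpos : 1 ≤ D := by omega
  obtain ⟨E, hE⟩ : ∃ E, 2 * D = E + 2 := ⟨2 * D - 2, by omega⟩
  have hnonloops : (Finset.univ.filter fun v : Fin n₂ => ¬ c (a, v) = c (a', v)).card
      ≤ 2 * m * E := by
    calc (Finset.univ.filter fun v : Fin n₂ => ¬ c (a, v) = c (a', v)).card
        ≤ (Cl.biUnion fun i =>
            (Finset.univ.filter fun v : Fin n₂ => c (a, v) = i) ∪
            (Finset.univ.filter fun v : Fin n₂ => c (a', v) = i)).card := by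
          apply Finset.card_le_card
          intro v hv
          simp only [Finset.mem_filter, Finset.mem_univ, true_and] at hv
          rcases hClcover v hv with h | h
          · exact Finset.mem_biUnion.mpr ⟨c (a, v), h,
              Finset.mem_union_left _ (Finset.mem_filter.mpr ⟨Finset.mem_univ _, rfl⟩)⟩
          · exact Finset.mem_biUnion.mpr ⟨c (a', v), h,
              Finset.mem_union_right _ (Finset.mem_filter.mpr ⟨Finset.mem_univ _, rfl⟩)⟩
      _ ≤ ∑ i ∈ Cl, ((Finset.univ.filter fun v : Fin n₂ => c (a, v) = i) ∪
            (Finset.univ.filter fun v : Fin n₂ => c (a', v) = i)).card :=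
          Finset.card_biUnion_le
      _ ≤ ∑ i ∈ Cl, E := by
          apply Finset.sum_le_sum
          intro i _
          have h1 := Finset.card_union_le
            (Finset.univ.filter fun v : Fin n₂ => c (a, v) = i)
            (Finset.univ.filter fun v : Fin n₂ => c (a', v) = i)
          have h2 := hda i
          have h3 := hda' i
          simp only [hd] at h2 h3
          omega
      _ = Cl.card * E := by rw [Finset.sum_const, smul_eq_mul]
      _ ≤ 2 * m * E := Nat.mul_le_mul_right _ hClcard
  -- final contradiction
  have hpart := Finset.card_filter_add_card_filter_not
    (s := (Finset.univ : Finset (Fin n₂))) (p := fun v => c (a, v) = c (a', v))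
  rw [Finset.card_univ, Fintype.card_fin] at hpart
  have hEbound : E ≤ Q + r + 1 := by omega
  have hmulE : 2 * m * E ≤ 2 * m * (Q + r + 1) := Nat.mul_le_mul_left _ hEbound
  linarith [hpart, hloops, hnonloops, hmulE, hn₂', hm1]
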